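/- For every integer k ≥ 2, r_3(C_4, k) ≤ ⌊(k+1)²/2⌋ − 1; explicitly, r_3(C_4,k) ≤ ((k+1)² − 1)/2 − 1 when k is even and r_3(C_4,k) ≤ (k+1)²/2 − 1 when k is odd. -/

import Mathlib

/-- The complete multipartite graph with `p` parts, each of size `n`:
vertices are pairs `(part, index)`, adjacent iff they lie in different parts. -/
def completeMultipartite (p n : ℕ) : SimpleGraph (Fin p × Fin n) where
  Adj v w := v.1 ≠ w.1
  symm := ⟨fun _ _ h => h.symm⟩
  loopless := ⟨fun _ h => h rfl⟩

instance (p n : ℕ) : DecidableRel (completeMultipartite p n).Adj :=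
  fun v w => inferInstanceAs (Decidable (v.1 ≠ w.1))

/-- The edge coloring `c` contains a monochromatic cycle `C₄` in the graph `G`. -/
def HasMonoC4 {V : Type*} (G : SimpleGraph V) {k : ℕ} (c : Sym2 V → Fin k) : Prop :=
  ∃ v₁ v₂ v₃ v₄ : V,
    v₁ ≠ v₂ ∧ v₁ ≠ v₃ ∧ v₁ ≠ v₄ ∧ v₂ ≠ v₃ ∧ v₂ ≠ v₄ ∧ v₃ ≠ v₄ ∧
    G.Adj v₁ v₂ ∧ G.Adj v₂ v₃ ∧ G.Adj v₃ v₄ ∧ G.Adj v₄ v₁ ∧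
    c s(v₁, v₂) = c s(v₂, v₃) ∧ c s(v₂, v₃) = c s(v₃, v₄) ∧ c s(v₃, v₄) = c s(v₄, v₁)

/-- The `p`-partite Ramsey number `r_p(C₄, k)`: the least positive `n` such that every
`k`-coloring of the edges of `K_n^p` contains a monochromatic `C₄`. -/
noncomputable def multipartiteRamsey (p k : ℕ) : ℕ :=
  sInf {n : ℕ | 0 < n ∧
    ∀ c : Sym2 (Fin p × Fin n) → Fin k, HasMonoC4 (completeMultipartite p n) c}

open Finset

namespace TriRamsey

variable {k n : ℕ}

def Vf (n : ℕ) (A : Fin 3) : Finset (Fin 3 × Fin n) :=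
  univ.filter fun v => v.1 ≠ A

def deg (c : Sym2 (Fin 3 × Fin n) → Fin k) (v : Fin 3 × Fin n) (A : Fin 3) (i : Fin k) : ℕ :=
  (univ.filter fun j : Fin n => c s(v, (A, j)) = i).card

lemma card_Vf (A : Fin 3) : (Vf n A).card = 2 * n := by
  have h : Vf n A = ((univ : Finset (Fin 3)).filter (· ≠ A)) ×ˢ (univ : Finset (Fin n)) := by
    ext ⟨a, b⟩; simp [Vf]
  rw [h, card_product, filter_ne', card_erase_of_mem (mem_univ _)]
  simp [two_mul]

lemma sum_deg (c : Sym2 (Fin 3 × Fin n) → Fin k) (v : Fin 3 × Fin n) (A : Fin 3) :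
    ∑ i, deg c v A i = n := by
  classical
  have h := Finset.card_eq_sum_card_fiberwise
    (f := fun j : Fin n => c s(v, (A, j))) (s := univ) (t := univ) (fun x _ => mem_univ _)
  simp only [card_univ, Fintype.card_fin] at h
  simp only [deg]
  exact h.symm

lemma center_card_le_one (c : Sym2 (Fin 3 × Fin n) → Fin k)
    (hno : ¬ HasMonoC4 (completeMultipartite 3 n) c) (A : Fin 3) (i : Fin k)
    {j j' : Fin n} (hjj : j ≠ j') :
    ((Vf n A).filter fun v => c s(v, (A, j)) = i ∧ c s(v, (A, j')) = i).card ≤ 1 := by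
  rw [Finset.card_le_one]
  intro v hv w hw
  by_contra hne
  simp only [Vf, mem_filter, mem_univ, true_and, filter_filter] at hv hw
  obtain ⟨hv1, hv2, hv3⟩ := hv
  obtain ⟨hw1, hw2, hw3⟩ := hw
  apply hno
  refine ⟨(A, j), v, (A, j'), w, ?_, ?_, ?_, ?_, ?_, ?_, ?_, ?_, ?_, ?_, ?_, ?_, ?_⟩
  · intro h; subst h; exact hv1 rfl
  · exact fun h => hjj (congrArg Prod.snd h)
  · intro h; subst h; exact hw1 rfl
  · intro h; apply hv1; rw [h]
  · exact hne
  · intro h; apply hw1; rw [← h]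
  · exact Ne.symm hv1
  · exact hv1
  · exact Ne.symm hw1
  · exact hw1
  · rw [show (s((A,j),v) : Sym2 (Fin 3 × Fin n)) = s(v,(A,j)) from Sym2.eq_swap, hv2, hv3]
  · rw [show (s((A,j'),w) : Sym2 (Fin 3 × Fin n)) = s(w,(A,j')) from Sym2.eq_swap, hv3, hw3]
  · rw [show (s((A,j'),w) : Sym2 (Fin 3 × Fin n)) = s(w,(A,j')) from Sym2.eq_swap, hw3, hw2]

end TriRamsey

namespace TriRamsey

lemma cast_g (m : ℕ) : ((m * m - m : ℕ) : ℤ) = (m : ℤ) * m - m := by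
  rcases Nat.eq_zero_or_pos m with h | h
  · subst h; simp
  · have : m ≤ m * m := Nat.le_mul_of_pos_left m h
    push_cast [Nat.cast_sub this]
    ring

lemma nonneg_consec (x : ℤ) : 0 ≤ x * (x - 1) := by
  rcases le_or_gt x 0 with h | h
  · nlinarith
  · nlinarith

lemma convexity {k : ℕ} (q r : ℕ) (d : Fin k → ℕ) (hsum : ∑ i, d i = k * q + r) :
    k * (q * q - q) + 2 * (r * q) ≤ ∑ i, (d i * d i - d i) ∧
    ((∑ i, (d i * d i - d i)) = k * (q * q - q) + 2 * (r * q) →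
      ∀ i, d i = q ∨ d i = q + 1) := by
  classical
  have hDsum : ∑ i, (d i : ℤ) = (k : ℤ) * q + r := by
    have := congrArg (Nat.cast : ℕ → ℤ) hsum
    push_cast at this
    exact this
  have hsplit : ∑ i, ((d i : ℤ) * d i - d i) =
      (∑ i, ((d i : ℤ) - q) * ((d i : ℤ) - q - 1)) + ((k : ℤ) * (q * q - q) + 2 * (r * q)) := by
    have h1 : ∀ i : Fin k, ((d i : ℤ) * d i - d i) =
        ((d i : ℤ) - q) * ((d i : ℤ) - q - 1) + (2 * q * (d i : ℤ) + ((q : ℤ) * q - q) - 2 * (q * q)) := by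
      intro i; ring
    rw [Finset.sum_congr rfl (fun i _ => h1 i)]
    rw [Finset.sum_add_distrib]
    congr 1
    have : ∑ i : Fin k, (2 * (q:ℤ) * (d i : ℤ) + ((q : ℤ) * q - q) - 2 * ((q:ℤ) * q))
        = 2 * q * (∑ i, (d i : ℤ)) + (k : ℤ) * (((q : ℤ) * q - q) - 2 * (q * q)) := by
      rw [Finset.sum_sub_distrib, Finset.sum_add_distrib, ← Finset.mul_sum]
      simp [Finset.sum_const, card_univ, mul_comm]
      ring
    rw [this, hDsum]
    ring
  have hcastsum : ((∑ i, (d i * d i - d i) : ℕ) : ℤ) = ∑ i, ((d i : ℤ) * d i - d i) := by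
    push_cast [cast_g]
    rfl
  have hnonneg : 0 ≤ ∑ i, ((d i : ℤ) - q) * ((d i : ℤ) - q - 1) :=
    Finset.sum_nonneg fun i _ => nonneg_consec _
  constructor
  · have : ((k * (q * q - q) + 2 * (r * q) : ℕ) : ℤ) ≤ ((∑ i, (d i * d i - d i) : ℕ) : ℤ) := by
      rw [hcastsum, hsplit]
      push_cast [cast_g]
      linarith
    exact_mod_cast this
  · intro heq i
    have hz : ∑ j, ((d j : ℤ) - q) * ((d j : ℤ) - q - 1) = 0 := by
      have := congrArg (Nat.cast : ℕ → ℤ) heq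
      rw [hcastsum, hsplit] at this
      push_cast [cast_g] at this
      linarith
    have hterm := (Finset.sum_eq_zero_iff_of_nonneg (fun j _ => nonneg_consec ((d j : ℤ) - q))).mp hz i (mem_univ i)
    have := mul_eq_zero.mp hterm
    rcases this with h | h
    · left; have : (d i : ℤ) = q := by linarith
      exact_mod_cast this
    · right; have : (d i : ℤ) = q + 1 := by linarith
      exact_mod_cast this

lemma force_ge {α : Type*} (s : Finset α) (f : α → ℕ) (a : ℕ)
    (h : ∀ x ∈ s, a ≤ f x) (h2 : ∑ x ∈ s, f x ≤ s.card * a) :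
    ∀ x ∈ s, f x = a := by
  intro x hx
  by_contra hne
  have hlt : a < f x := lt_of_le_of_ne (h x hx) (Ne.symm hne)
  have : ∑ y ∈ s, a < ∑ y ∈ s, f y :=
    Finset.sum_lt_sum h ⟨x, hx, hlt⟩
  rw [Finset.sum_const, smul_eq_mul] at this
  omega

lemma force_le {α : Type*} (s : Finset α) (f : α → ℕ) (a : ℕ)
    (h : ∀ x ∈ s, f x ≤ a) (h2 : s.card * a ≤ ∑ x ∈ s, f x) :
    ∀ x ∈ s, f x = a := by
  intro x hx
  by_contra hne
  have hlt : f x < a := lt_of_le_of_ne (h x hx) hne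
  have : ∑ y ∈ s, f y < ∑ y ∈ s, a :=
    Finset.sum_lt_sum h ⟨x, hx, hlt⟩
  rw [Finset.sum_const, smul_eq_mul] at this
  omega

end TriRamsey

namespace TriRamsey

variable {k n : ℕ}

lemma S_le (c : Sym2 (Fin 3 × Fin n) → Fin k)
    (hno : ¬ HasMonoC4 (completeMultipartite 3 n) c) (A : Fin 3) (i : Fin k) :
    ∑ v ∈ Vf n A, (deg c v A i * deg c v A i - deg c v A i) ≤ n * n - n := by
  classical
  have step1 : ∀ v : Fin 3 × Fin n,
      deg c v A i * deg c v A i - deg c v A i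
        = ∑ p ∈ (univ : Finset (Fin n)).offDiag,
            (if c s(v, (A, p.1)) = i ∧ c s(v, (A, p.2)) = i then 1 else 0) := by
    intro v
    have h2 : ((univ.filter fun j : Fin n => c s(v, (A, j)) = i).offDiag)
        = (univ : Finset (Fin n)).offDiag.filter
            (fun p => c s(v, (A, p.1)) = i ∧ c s(v, (A, p.2)) = i) := by
      ext ⟨a, b⟩
      simp [Finset.mem_offDiag]
      tauto
    rw [deg, ← Finset.offDiag_card, h2, Finset.card_filter]
  calc ∑ v ∈ Vf n A, (deg c v A i * deg c v A i - deg c v A i)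
      = ∑ v ∈ Vf n A, ∑ p ∈ (univ : Finset (Fin n)).offDiag,
          (if c s(v, (A, p.1)) = i ∧ c s(v, (A, p.2)) = i then 1 else 0) := by
        exact Finset.sum_congr rfl fun v _ => step1 v
    _ = ∑ p ∈ (univ : Finset (Fin n)).offDiag, ∑ v ∈ Vf n A,
          (if c s(v, (A, p.1)) = i ∧ c s(v, (A, p.2)) = i then 1 else 0) :=
        Finset.sum_comm
    _ ≤ ∑ _p ∈ (univ : Finset (Fin n)).offDiag, 1 := by
        apply Finset.sum_le_sum
        intro p hp
        rw [← Finset.card_filter]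
        exact center_card_le_one c hno A i (Finset.mem_offDiag.mp hp).2.2
    _ = n * n - n := by
        rw [Finset.sum_const, smul_eq_mul, mul_one, Finset.offDiag_card]
        simp

lemma core (c : Sym2 (Fin 3 × Fin n) → Fin k)
    (hno : ¬ HasMonoC4 (completeMultipartite 3 n) c) (q r : ℕ) (hnqr : n = k * q + r) :
    3 * (2 * n * (k * (q * q - q) + 2 * (r * q)))
        ≤ ∑ A, ∑ v ∈ Vf n A, ∑ i, (deg c v A i * deg c v A i - deg c v A i) ∧
    ∑ A, ∑ v ∈ Vf n A, ∑ i, (deg c v A i * deg c v A i - deg c v A i)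
        ≤ 3 * (k * (n * n - n)) := by
  constructor
  · have hA : ∀ A : Fin 3, 2 * n * (k * (q * q - q) + 2 * (r * q))
        ≤ ∑ v ∈ Vf n A, ∑ i, (deg c v A i * deg c v A i - deg c v A i) := by
      intro A
      calc 2 * n * (k * (q * q - q) + 2 * (r * q))
          = ∑ _v ∈ Vf n A, (k * (q * q - q) + 2 * (r * q)) := by
            rw [Finset.sum_const, smul_eq_mul, card_Vf]
        _ ≤ ∑ v ∈ Vf n A, ∑ i, (deg c v A i * deg c v A i - deg c v A i) := by
            apply Finset.sum_le_sum
            intro v _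
            exact (convexity q r (deg c v A) (by rw [sum_deg, hnqr])).1
    calc 3 * (2 * n * (k * (q * q - q) + 2 * (r * q)))
        = ∑ _A : Fin 3, 2 * n * (k * (q * q - q) + 2 * (r * q)) := by simp
      _ ≤ _ := Finset.sum_le_sum fun A _ => hA A
  · have hA : ∀ A : Fin 3, ∑ v ∈ Vf n A, ∑ i, (deg c v A i * deg c v A i - deg c v A i)
        ≤ k * (n * n - n) := by
      intro A
      rw [Finset.sum_comm]
      calc ∑ i, ∑ v ∈ Vf n A, (deg c v A i * deg c v A i - deg c v A i)
          ≤ ∑ _i : Fin k, (n * n - n) := Finset.sum_le_sum fun i _ => S_le c hno A i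
        _ = k * (n * n - n) := by simp
    calc ∑ A, ∑ v ∈ Vf n A, ∑ i, (deg c v A i * deg c v A i - deg c v A i)
        ≤ ∑ _A : Fin 3, k * (n * n - n) := Finset.sum_le_sum fun A _ => hA A
      _ = 3 * (k * (n * n - n)) := by simp

end TriRamsey

namespace TriRamsey

variable {k n : ℕ}

lemma le_sq (q : ℕ) : q ≤ q * q := by
  rcases Nat.eq_zero_or_pos q with h | h
  · simp [h]
  · exact Nat.le_mul_of_pos_left q h

lemma split_sum {α : Type*} (s : Finset α) (f : α → ℕ) (q : ℕ)
    (h : ∀ v ∈ s, f v = q ∨ f v = q + 1) :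
    (∑ v ∈ s, (f v * f v - f v)) = s.card * (q * q - q) + 2 * q * (∑ v ∈ s, (f v - q)) ∧
    (∑ v ∈ s, f v) = s.card * q + (∑ v ∈ s, (f v - q)) := by
  constructor
  · have key : ∀ v ∈ s, f v * f v - f v = (q * q - q) + 2 * q * (f v - q) := by
      intro v hv
      rcases h v hv with h1 | h1 <;> rw [h1]
      · simp
      · have e : (q + 1) * (q + 1) = q * q + 2 * q + 1 := by ring
        have hq : q ≤ q * q := le_sq q
        have e2 : q + 1 - q = 1 := by omega
        rw [e, e2, mul_one]
        generalize q * q = X at hq ⊢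
        omega
    rw [Finset.sum_congr rfl key, Finset.sum_add_distrib, Finset.sum_const, smul_eq_mul,
      ← Finset.mul_sum]
  · have key : ∀ v ∈ s, f v = q + (f v - q) := by
      intro v hv; rcases h v hv with h1 | h1 <;> omega
    rw [Finset.sum_congr rfl key, Finset.sum_add_distrib, Finset.sum_const, smul_eq_mul]

lemma even_eq (m n k r : ℕ) (hk : k = 2 * m) (hr : r + 1 = 2 * m)
    (hn : n + 1 = 2 * (m * m) + 2 * m) :
    2 * n * (k * (m * m - m) + 2 * (r * m)) = k * (n * n - n) := by
  have h1 : m ≤ m * m := le_sq m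
  have h2 : n ≤ n * n := le_sq n
  zify [h1, h2]
  have hkz : (k : ℤ) = 2 * m := by exact_mod_cast hk
  have hrz : (r : ℤ) = 2 * m - 1 := by
    have : ((r : ℤ) + 1) = 2 * m := by exact_mod_cast hr
    linarith
  have hnz : (n : ℤ) = 2 * m * m + 2 * m - 1 := by
    have : ((n : ℤ) + 1) = 2 * (m * m) + 2 * m := by exact_mod_cast hn
    linarith
  rw [hkz, hrz, hnz]
  ring

lemma even_master (m n E : ℕ) (hm : 1 ≤ m) (hn : n + 1 = 2 * (m * m) + 2 * m)
    (h : 2 * n * (m * m - m) + 2 * m * E = n * n - n) : m = 1 ∧ n = 3 ∧ E = 3 := by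
  have h1 : m ≤ m * m := le_sq m
  have h2 : n ≤ n * n := le_sq n
  zify [h1, h2] at h
  have hnz : (n : ℤ) = 2 * m * m + 2 * m - 1 := by
    have : ((n : ℤ) + 1) = 2 * (m * m) + 2 * m := by exact_mod_cast hn
    linarith
  rw [hnz] at h
  have key2 : 2 * ((m : ℤ) * ((E : ℤ) - (4 * (m:ℤ) * m + 2 * m - 4))) = 2 := by
    linear_combination h
  have key : (m : ℤ) * ((E : ℤ) - (4 * (m:ℤ) * m + 2 * m - 4)) = 1 := by linarith
  have hdvd : (m : ℤ) ∣ 1 := ⟨_, key.symm⟩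
  have hle : (m : ℤ) ≤ 1 := Int.le_of_dvd one_pos hdvd
  have hm1 : m = 1 := by
    have : m ≤ 1 := by exact_mod_cast hle
    omega
  subst hm1
  have hn3 : n = 3 := by simp at hn; omega
  refine ⟨rfl, hn3, ?_⟩
  have : (E : ℤ) = 3 := by
    have := key
    push_cast at this
    linarith
  exact_mod_cast this

lemma odd_lt (m n k q r : ℕ) (hm : 1 ≤ m) (hk : k = 2 * m + 1) (hq : q = m + 1) (hr : r = m)
    (hn : n = 2 * (m * m) + 4 * m + 1) :
    3 * (k * (n * n - n)) < 3 * (2 * n * (k * (q * q - q) + 2 * (r * q))) := by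
  have h1 : q ≤ q * q := le_sq q
  have h2 : n ≤ n * n := le_sq n
  zify [h1, h2]
  have hkz : (k : ℤ) = 2 * m + 1 := by exact_mod_cast hk
  have hqz : (q : ℤ) = m + 1 := by exact_mod_cast hq
  have hrz : (r : ℤ) = m := by exact_mod_cast hr
  have hnz : (n : ℤ) = 2 * m * m + 4 * m + 1 := by
    have : (n : ℤ) = 2 * (m * m) + 4 * m + 1 := by exact_mod_cast hn
    linarith
  rw [hkz, hqz, hrz, hnz]
  have hmz : (1 : ℤ) ≤ m := by exact_mod_cast hm
  nlinarith [hmz, mul_pos (show (0:ℤ) < m by linarith) (show (0:ℤ) < m by linarith)]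

end TriRamsey

namespace TriRamsey

variable {k n : ℕ}

lemma cardP (c : Sym2 (Fin 3 × Fin n) → Fin k) (i : Fin k) :
    ((univ : Finset ((Fin 3 × Fin n) × (Fin 3 × Fin n))).filter
      fun p => p.1.1 ≠ p.2.1 ∧ c s(p.1, p.2) = i).card
    = ∑ A, ∑ v ∈ Vf n A, deg c v A i := by
  classical
  rw [Finset.card_filter]
  rw [Fintype.sum_prod_type]
  have inner : ∀ v : Fin 3 × Fin n,
      (∑ w : Fin 3 × Fin n, if v.1 ≠ w.1 ∧ c s(v, w) = i then 1 else 0)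
      = ∑ A : Fin 3, (if v.1 ≠ A then deg c v A i else 0) := by
    intro v
    rw [Fintype.sum_prod_type]
    apply Finset.sum_congr rfl
    intro A _
    by_cases h : v.1 ≠ A
    · simp only [if_pos h, deg, Finset.card_filter]
      apply Finset.sum_congr rfl
      intro j _
      simp [h]
    · simp only [if_neg h]
      apply Finset.sum_eq_zero
      intro j _
      simp only [ite_eq_right_iff]
      intro hcon
      exact absurd hcon.1 h
  rw [Finset.sum_congr rfl fun v _ => inner v]
  rw [Finset.sum_comm]
  apply Finset.sum_congr rfl
  intro A _
  rw [← Finset.sum_filter]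
  apply Finset.sum_congr
  · ext v; simp [Vf, ne_comm]
  · intros; rfl

lemma even_cardP (c : Sym2 (Fin 3 × Fin n) → Fin k) (i : Fin k) :
    Even ((univ : Finset ((Fin 3 × Fin n) × (Fin 3 × Fin n))).filter
      fun p => p.1.1 ≠ p.2.1 ∧ c s(p.1, p.2) = i).card := by
  classical
  set P := ((univ : Finset ((Fin 3 × Fin n) × (Fin 3 × Fin n))).filter
      fun p => p.1.1 ≠ p.2.1 ∧ c s(p.1, p.2) = i) with hP
  have h0 : ∑ _p ∈ P, (1 : ZMod 2) = 0 := by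
    apply Finset.sum_involution (g := fun p _ => (p.2, p.1))
    · intro a ha; decide
    · intro a ha h1
      intro hcon
      have ha' : a.1.1 ≠ a.2.1 := by
        rw [hP] at ha
        exact (Finset.mem_filter.mp ha).2.1
      apply ha'
      have : a.2 = a.1 := congrArg Prod.fst hcon
      rw [this]
    · intro a ha
      rw [hP, Finset.mem_filter] at ha ⊢
      refine ⟨Finset.mem_univ _, ha.2.1.symm, ?_⟩
      rw [show (s(a.2, a.1) : Sym2 (Fin 3 × Fin n)) = s(a.1, a.2) from Sym2.eq_swap]
      exact ha.2.2
    · intro a ha; rfl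
  have h1 : ((P.card : ℕ) : ZMod 2) = 0 := by
    rw [← h0]
    simp
  rw [ZMod.natCast_eq_zero_iff] at h1
  exact even_iff_two_dvd.mpr h1

end TriRamsey

namespace TriRamsey

variable {k n : ℕ}

lemma odd_contra (c : Sym2 (Fin 3 × Fin n) → Fin k)
    (hno : ¬ HasMonoC4 (completeMultipartite 3 n) c) (m : ℕ) (hm : 1 ≤ m)
    (hk2 : k = 2 * m + 1) (hnn : n = 2 * (m * m) + 4 * m + 1) : False := by
  have hnqr : n = k * (m + 1) + m := by
    rw [hk2]
    have h2 : (2 * m + 1) * (m + 1) = 2 * (m * m) + 3 * m + 1 := by ring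
    rw [h2]
    omega
  obtain ⟨hlow, hup⟩ := core c hno (m + 1) m hnqr
  have hlt := odd_lt m n k (m + 1) m hm hk2 rfl rfl hnn
  exact absurd (hlow.trans hup) (not_le.mpr hlt)

lemma even_contra (c : Sym2 (Fin 3 × Fin n) → Fin k)
    (hno : ¬ HasMonoC4 (completeMultipartite 3 n) c) (m r : ℕ) (hm : 1 ≤ m)
    (hk2 : k = 2 * m) (hr : r + 1 = 2 * m) (hnn : n + 1 = 2 * (m * m) + 2 * m) : False := by
  classical
  have hnqr : n = k * m + r := by
    rw [hk2]
    have h2 : 2 * m * m = 2 * (m * m) := by ring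
    rw [h2]
    omega
  obtain ⟨hlow, hup⟩ := core c hno m r hnqr
  set F := k * (m * m - m) + 2 * (r * m) with hF
  set N2 := n * n - n with hN2
  have heq : 2 * n * F = k * N2 := even_eq m n k r hk2 hr hnn
  set T := ∑ A, ∑ v ∈ Vf n A, ∑ i, (deg c v A i * deg c v A i - deg c v A i) with hT
  have hTval : T = 3 * (k * N2) := le_antisymm hup (by rw [← heq]; exact hlow)
  -- force per (v, A) : inner sum = F
  have hWlow : ∀ A : Fin 3, 2 * n * F
      ≤ ∑ v ∈ Vf n A, ∑ i, (deg c v A i * deg c v A i - deg c v A i) := by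
    intro A
    calc 2 * n * F = ∑ _v ∈ Vf n A, F := by rw [Finset.sum_const, smul_eq_mul, card_Vf]
      _ ≤ _ := Finset.sum_le_sum fun v _ =>
          (convexity m r (deg c v A) (by rw [sum_deg]; exact hnqr)).1
  have hWeq : ∀ A ∈ (univ : Finset (Fin 3)),
      (∑ v ∈ Vf n A, ∑ i, (deg c v A i * deg c v A i - deg c v A i)) = 2 * n * F := by
    apply force_ge
    · exact fun A _ => hWlow A
    · have hcard : (univ : Finset (Fin 3)).card = 3 := by simp
      rw [hcard, ← hT, hTval, ← heq]
  have hInner : ∀ A : Fin 3, ∀ v ∈ Vf n A,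
      (∑ i, (deg c v A i * deg c v A i - deg c v A i)) = F := by
    intro A
    apply force_ge
    · exact fun v _ => (convexity m r (deg c v A) (by rw [sum_deg]; exact hnqr)).1
    · rw [card_Vf]
      exact le_of_eq (hWeq A (mem_univ A))
  have hbal : ∀ A : Fin 3, ∀ v ∈ Vf n A, ∀ i : Fin k,
      deg c v A i = m ∨ deg c v A i = m + 1 := by
    intro A v hv
    exact (convexity m r (deg c v A) (by rw [sum_deg]; exact hnqr)).2 (hInner A v hv)
  -- force per (A, i) : S A i = N2
  have hTS : ∑ A, ∑ i : Fin k, (∑ v ∈ Vf n A, (deg c v A i * deg c v A i - deg c v A i)) = T := by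
    apply Finset.sum_congr rfl
    intro A _
    exact Finset.sum_comm
  have hSout : ∀ A ∈ (univ : Finset (Fin 3)),
      (∑ i : Fin k, ∑ v ∈ Vf n A, (deg c v A i * deg c v A i - deg c v A i)) = k * N2 := by
    apply force_le
    · intro A _
      calc ∑ i : Fin k, ∑ v ∈ Vf n A, (deg c v A i * deg c v A i - deg c v A i)
          ≤ ∑ _i : Fin k, N2 := Finset.sum_le_sum fun i _ => S_le c hno A i
        _ = k * N2 := by simp
    · have hcard : (univ : Finset (Fin 3)).card = 3 := by simp
      rw [hcard, hTS, hTval]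
  have hSeq : ∀ A : Fin 3, ∀ i : Fin k,
      (∑ v ∈ Vf n A, (deg c v A i * deg c v A i - deg c v A i)) = N2 := by
    intro A i
    refine force_le univ _ N2 (fun i _ => S_le c hno A i) ?_ i (mem_univ i)
    rw [card_univ, Fintype.card_fin]
    exact le_of_eq (hSout A (mem_univ A)).symm
  -- extract m = 1, n = 3 and all degree sums = 9
  have hmaster : ∀ A : Fin 3, ∀ i : Fin k, m = 1 ∧ n = 3 ∧
      (∑ v ∈ Vf n A, (deg c v A i - m)) = 3 := by
    intro A i
    obtain ⟨hs1, _⟩ := split_sum (Vf n A) (fun v => deg c v A i) m (fun v hv => hbal A v hv i)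
    rw [hSeq A i, card_Vf] at hs1
    exact even_master m n _ hm hnn hs1.symm
  obtain ⟨hm1, hn3, _⟩ := hmaster 0 ⟨0, by omega⟩
  have hDeg : ∀ A : Fin 3, ∀ i : Fin k, (∑ v ∈ Vf n A, deg c v A i) = 9 := by
    intro A i
    obtain ⟨_, hs2⟩ := split_sum (Vf n A) (fun v => deg c v A i) m (fun v hv => hbal A v hv i)
    rw [card_Vf, (hmaster A i).2.2, hm1] at hs2
    omega
  -- parity contradiction
  set i0 : Fin k := ⟨0, by omega⟩ with hi0
  have h27 : ((univ : Finset ((Fin 3 × Fin n) × (Fin 3 × Fin n))).filter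
      fun p => p.1.1 ≠ p.2.1 ∧ c s(p.1, p.2) = i0).card = 27 := by
    rw [cardP c i0]
    rw [Finset.sum_congr rfl fun A _ => hDeg A i0]
    simp
  have := even_cardP c i0
  rw [h27] at this
  obtain ⟨t, ht⟩ := this
  omega

end TriRamsey


namespace TriRamsey

theorem tri_main (k n : ℕ) (hk : 2 ≤ k) (hn : n + 1 = (k + 1) ^ 2 / 2) :
    ∀ c : Sym2 (Fin 3 × Fin n) → Fin k, HasMonoC4 (completeMultipartite 3 n) c := by
  intro c
  by_contra hno
  rcases Nat.even_or_odd k with he | ho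
  · obtain ⟨m, hm⟩ := he
    have hm1 : 1 ≤ m := by omega
    have hsq : (k + 1) ^ 2 = 4 * (m * m) + 4 * m + 1 := by subst hm; ring
    rw [hsq] at hn
    have hnn : n + 1 = 2 * (m * m) + 2 * m := by omega
    exact even_contra c hno m (2 * m - 1) hm1 (by omega) (by omega) hnn
  · obtain ⟨m, hm⟩ := ho
    have hm1 : 1 ≤ m := by omega
    have hsq : (k + 1) ^ 2 = 4 * (m * m) + 8 * m + 4 := by subst hm; ring
    rw [hsq] at hn
    have hnn : n = 2 * (m * m) + 4 * m + 1 := by omega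
    exact odd_contra c hno m hm1 (by omega) hnn

end TriRamsey


/-- For every `k ≥ 2`, `r₃(C₄, k) ≤ ⌊(k+1)²/2⌋ - 1`; explicitly,
`r₃(C₄,k) ≤ ((k+1)² - 1)/2 - 1` for even `k` and `r₃(C₄,k) ≤ (k+1)²/2 - 1` for odd `k`. -/
theorem tripartiteRamsey_upper_bound (k : ℕ) (hk : 2 ≤ k) :
    multipartiteRamsey 3 k ≤ (k + 1) ^ 2 / 2 - 1 ∧
    (Even k → multipartiteRamsey 3 k ≤ ((k + 1) ^ 2 - 1) / 2 - 1) ∧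
    (Odd k → multipartiteRamsey 3 k ≤ (k + 1) ^ 2 / 2 - 1) := by
  have h9 : 9 ≤ (k + 1) ^ 2 := by
    calc (9 : ℕ) = 3 ^ 2 := by norm_num
      _ ≤ (k + 1) ^ 2 := Nat.pow_le_pow_left (by omega) 2
  have h1 : multipartiteRamsey 3 k ≤ (k + 1) ^ 2 / 2 - 1 := by
    apply Nat.sInf_le
    constructor
    · omega
    · exact TriRamsey.tri_main k _ hk (by omega)
  refine ⟨h1, ?_, fun _ => h1⟩
  intro hev
  obtain ⟨t, ht⟩ := hev
  have hsq : (k + 1) ^ 2 = 4 * (t * t) + 4 * t + 1 := by subst ht; ring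
  have heq : ((k + 1) ^ 2 - 1) / 2 - 1 = (k + 1) ^ 2 / 2 - 1 := by rw [hsq]; omega
  rw [heq]
  exact h1
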